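/- In the constructed instance for sacrificing return for less volatility, the market averages are: Φ₁(M,0) = B−1; Φ₁(M,t) = (B−1)/B for every odd t with 1 ≤ t ≤ P; and Φ₁(M,t) = ((B−1)/B)·⌊B/α⌋ for every even t with 2 ≤ t ≤ P and for every t with P < t ≤ f. -/

import Mathlib

/-- Price-weighted index of the set of stocks `T` at time `t`,
given prices `Sp`. -/
noncomputable def phi1 (Sp : ℕ → ℕ → ℝ) (T : Finset ℕ) (t : ℕ) : ℝ :=
  (∑ i ∈ T, Sp i t) / T.card

/-- One-period return of the set of stocks `T` at time `t ≥ 1`. -/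
noncomputable def ret (Sp : ℕ → ℕ → ℝ) (T : Finset ℕ) (t : ℕ) : ℝ :=
  Real.log (phi1 Sp T t / phi1 Sp T (t - 1))

/-- Average return of the set of stocks `T` up to time `t ≥ 1`. -/
noncomputable def avgRet (Sp : ℕ → ℕ → ℝ) (T : Finset ℕ) (t : ℕ) : ℝ :=
  (∑ i ∈ Finset.Icc 1 t, ret Sp T i) / t

/-- Volatility of the set of stocks `T` up to time `t ≥ 2`. -/
noncomputable def vol (Sp : ℕ → ℕ → ℝ) (T : Finset ℕ) (t : ℕ) : ℝ :=
  Real.sqrt ((∑ i ∈ Finset.Icc 1 t, (ret Sp T i - avgRet Sp T t) ^ 2) /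
    ((t : ℝ) - 1))

theorem stmt_19
    -- the minimum-cover instance
    (s n K : ℕ) (hs : 1 ≤ s) (C : ℕ → Finset ℕ)
    (hC : ∀ i ∈ Finset.Icc 1 n, C i ⊆ Finset.Icc 1 s)
    (hK2 : 2 ≤ K) (hKn : K < n)
    -- the performance and volatility parameters
    (α β : ℝ) (hα : 0 < α) (hβ : 0 < β)
    -- constants of the construction
    (k P q B m f : ℕ) (hk : k = K)
    (hP : P = max (2 * (k + 1)) (2 * s))
    (hq : (q : ℤ) = ⌈max (1 + 4 / β) (Real.log (2 / α) / Real.log k)⌉)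
    (hB : (B : ℤ) = ⌈α * (k : ℝ) ^ q⌉)
    (hm : m = n * B) (hf : f = P + s)
    (v₁ v₂ : ℝ) (hv₁ : v₁ = (B : ℝ) - 1) (hv₂ : v₂ = (k : ℝ) * ((B : ℝ) - 1))
    -- the constructed prices
    (Sp : ℕ → ℕ → ℝ)
    (h0 : ∀ i ∈ Finset.Icc 1 m, Sp i 0 = v₁)
    (hpad1 : ∀ t, 1 ≤ t → t ≤ P → ∀ i ∈ Finset.Icc 1 n, Sp i t = v₁)
    (hpadEven : ∀ t, 1 ≤ t → t ≤ P → t % 2 = 0 →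
      Sp (min (n + t / 2) m) t =
        ((m : ℝ) - n) * ((⌊(B : ℝ) / α⌋ : ℤ) - 1) ∧
      ∀ i, n < i → i ≤ m → i ≠ min (n + t / 2) m → Sp i t = 0)
    (hpadOdd : ∀ t, 1 ≤ t → t ≤ P → t % 2 = 1 →
      ∀ i, n < i → i ≤ m → Sp i t = 0)
    (hcode : ∀ t, P < t → t ≤ f →
      (∀ i ∈ Finset.Icc 1 n, Sp i t = if t - P ∈ C i then v₂ else 0) ∧
      (∀ i, n < i → i < m → Sp i t = 0) ∧
      Sp m t = ((m : ℝ) - n) * ((⌊(B : ℝ) / α⌋ : ℤ) - (k : ℝ)) +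
        (((Finset.Icc 1 n).filter (fun i => t - P ∉ C i)).card : ℝ) * v₂) :
    -- statement 19
    phi1 Sp (Finset.Icc 1 m) 0 = (B : ℝ) - 1 ∧
    (∀ t, 1 ≤ t → t ≤ P → t % 2 = 1 →
      phi1 Sp (Finset.Icc 1 m) t = ((B : ℝ) - 1) / B) ∧
    (∀ t, 2 ≤ t → t ≤ P → t % 2 = 0 →
      phi1 Sp (Finset.Icc 1 m) t =
        (((B : ℝ) - 1) / B) * ((⌊(B : ℝ) / α⌋ : ℤ) : ℝ)) ∧
    (∀ t, P < t → t ≤ f →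
      phi1 Sp (Finset.Icc 1 m) t =
        (((B : ℝ) - 1) / B) * ((⌊(B : ℝ) / α⌋ : ℤ) : ℝ)) := by
  have hk2 : 2 ≤ k := hk ▸ hK2
  have hn1 : 1 ≤ n := by omega
  have hkpos : (0:ℝ) < (k:ℝ) := by exact_mod_cast (by omega : 0 < k)
  have hB1 : 1 ≤ B := by
    have hpos : (0:ℝ) < α * (k:ℝ) ^ q := by positivity
    have h1 : (1:ℤ) ≤ ⌈α * (k:ℝ) ^ q⌉ := Int.ceil_pos.mpr hpos
    rw [← hB] at h1
    exact_mod_cast h1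
  have hnm : n ≤ m := by
    rw [hm]; calc n = n * 1 := (Nat.mul_one n).symm
      _ ≤ n * B := Nat.mul_le_mul_left n hB1
  have hm0 : 0 < m := by rw [hm]; positivity
  have hmR : (m:ℝ) = (n:ℝ) * (B:ℝ) := by rw [hm]; push_cast; ring
  have hmne : (m:ℝ) ≠ 0 := by positivity
  have hnne : (n:ℝ) ≠ 0 := by positivity
  have hBne : (B:ℝ) ≠ 0 := by positivity
  have hIcc : Finset.Icc 1 m = Finset.Ioc 0 m := by
    rw [← Finset.Icc_add_one_left_eq_Ioc, Nat.zero_add]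
  have hsplit : ∀ g : ℕ → ℝ, (∑ i ∈ Finset.Icc 1 m, g i)
      = (∑ i ∈ Finset.Icc 1 n, g i) + ∑ i ∈ Finset.Ioc n m, g i := by
    intro g
    rw [hIcc, ← Finset.sum_Ioc_consecutive _ (Nat.zero_le n) hnm, ← Finset.Icc_add_one_left_eq_Ioc, Nat.zero_add]
  have hcardn : (Finset.Icc 1 n).card = n := by simp
  set c : ℝ := ((⌊(B : ℝ) / α⌋ : ℤ) : ℝ) with hc
  refine ⟨?_, ?_, ?_, ?_⟩
  · -- time 0
    unfold phi1
    rw [Finset.sum_congr rfl h0, Finset.sum_const, Nat.card_Icc]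
    rw [hv₁]
    simp only [Nat.add_sub_cancel, nsmul_eq_mul]
    field_simp
  · -- odd times
    intro t ht1 htP hodd
    unfold phi1
    rw [hsplit]
    have h1 : (∑ i ∈ Finset.Icc 1 n, Sp i t) = (n:ℝ) * v₁ := by
      rw [Finset.sum_congr rfl (hpad1 t ht1 htP), Finset.sum_const, hcardn]
      simp [mul_comm]
    have h2 : (∑ i ∈ Finset.Ioc n m, Sp i t) = 0 := by
      apply Finset.sum_eq_zero
      intro i hi
      obtain ⟨hi1, hi2⟩ := Finset.mem_Ioc.mp hi
      exact hpadOdd t ht1 htP hodd i hi1 hi2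
    rw [h1, h2, hv₁, Nat.card_Icc]
    simp only [Nat.add_sub_cancel]
    rw [hmR]
    field_simp
    ring
  · -- even times
    intro t ht2 htP heven
    have ht1 : 1 ≤ t := by omega
    unfold phi1
    rw [hsplit]
    have h1 : (∑ i ∈ Finset.Icc 1 n, Sp i t) = (n:ℝ) * v₁ := by
      rw [Finset.sum_congr rfl (hpad1 t ht1 htP), Finset.sum_const, hcardn]
      simp [mul_comm]
    have h2 : (∑ i ∈ Finset.Ioc n m, Sp i t) = ((m:ℝ) - n) * (c - 1) := by
      rcases lt_or_eq_of_le hnm with hlt | heq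
      · have hj1 : n < min (n + t / 2) m := by
          have : 1 ≤ t / 2 := by omega
          exact lt_min (by omega) hlt
        have hj2 : min (n + t / 2) m ≤ m := min_le_right _ _
        rw [Finset.sum_eq_single_of_mem (min (n + t / 2) m)
          (Finset.mem_Ioc.mpr ⟨hj1, hj2⟩)]
        · exact (hpadEven t ht1 htP heven).1
        · intro i hi hne
          obtain ⟨hi1, hi2⟩ := Finset.mem_Ioc.mp hi
          exact (hpadEven t ht1 htP heven).2 i hi1 hi2 hne
      · have : Finset.Ioc n m = ∅ := by rw [heq]; simp
        rw [this, Finset.sum_empty, heq]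
        ring
    rw [h1, h2, hv₁, Nat.card_Icc]
    simp only [Nat.add_sub_cancel]
    rw [hmR]
    field_simp
    ring
  · -- coding times
    intro t htP htf
    obtain ⟨hc1, hc2, hc3⟩ := hcode t htP htf
    unfold phi1
    rw [hsplit]
    set z : ℕ := ((Finset.Icc 1 n).filter (fun i => t - P ∉ C i)).card with hz
    have hzn : ((Finset.Icc 1 n).filter (fun i => t - P ∈ C i)).card + z = n := by
      rw [hz, Finset.card_filter_add_card_filter_not, hcardn]
    have h1 : (∑ i ∈ Finset.Icc 1 n, Sp i t)
        = ((n:ℝ) - (z:ℝ)) * v₂ := by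
      rw [Finset.sum_congr rfl hc1, ← Finset.sum_filter, Finset.sum_const]
      have : (((Finset.Icc 1 n).filter (fun i => t - P ∈ C i)).card : ℝ)
          = (n:ℝ) - (z:ℝ) := by
        have h' : (((Finset.Icc 1 n).filter (fun i => t - P ∈ C i)).card : ℝ)
            + (z:ℝ) = (n:ℝ) := by exact_mod_cast hzn
        linarith
      rw [nsmul_eq_mul, this]
    have h2 : (∑ i ∈ Finset.Ioc n m, Sp i t)
        = ((m:ℝ) - n) * (c - (k:ℝ)) + (z:ℝ) * v₂ := by
      rcases lt_or_eq_of_le hnm with hlt | heq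
      · rw [Finset.sum_eq_single_of_mem m (Finset.mem_Ioc.mpr ⟨hlt, le_refl m⟩)]
        · exact hc3
        · intro i hi hne
          obtain ⟨hi1, hi2⟩ := Finset.mem_Ioc.mp hi
          exact hc2 i hi1 (lt_of_le_of_ne hi2 hne)
      · have hB1' : B = 1 := by
          have : n * B = n * 1 := by omega
          exact Nat.eq_of_mul_eq_mul_left (by omega) this
        have hv₂0 : v₂ = 0 := by rw [hv₂, hB1']; simp
        have : Finset.Ioc n m = ∅ := by rw [heq]; simp
        rw [this, Finset.sum_empty, heq, hv₂0]
        ring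
    rw [h1, h2, hv₂, Nat.card_Icc]
    simp only [Nat.add_sub_cancel]
    rw [hmR]
    field_simp
    ring
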